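/- Let X and Z be finite alphabets, n ∈ ℕ, and for each m ∈ {1,…,n} let V_m, Ṽ_m : X → P(Z) be channels with d(V_m,Ṽ_m) ≤ ε for some ε ∈ (0,1). Let U be an arbitrary finite set, P_U the uniform distribution on U, and E(xⁿ|u) an arbitrary stochastic encoder. Define the joint distributions P(u,zⁿ) = ∑_{xⁿ} ∏_{m=1}^n V_m(z_m|x_m) · E(xⁿ|u)P_U(u) and P̃(u,zⁿ) = ∑_{xⁿ} ∏_{m=1}^n Ṽ_m(z_m|x_m) · E(xⁿ|u)P_U(u). Then |I(U;Zⁿ‖P) − I(U;Zⁿ‖P̃)| ≤ n·(4ε·log|Z| + 4H₂(ε)). -/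

import Mathlib

open Real Finset

/-- Binary entropy function (base 2). -/
noncomputable def H2 (ε : ℝ) : ℝ :=
  -(ε * Real.logb 2 ε) - (1 - ε) * Real.logb 2 (1 - ε)

/-- `p` is a probability distribution on the finite alphabet `α`. -/
def IsProb {α : Type*} [Fintype α] (p : α → ℝ) : Prop :=
  (∀ a, 0 ≤ p a) ∧ ∑ a, p a = 1

/-- `W` is a channel (stochastic matrix) from `X` to `Y`. -/
def IsChannel {X Y : Type*} [Fintype Y] (W : X → Y → ℝ) : Prop :=
  ∀ x, (∀ y, 0 ≤ W x y) ∧ ∑ y, W x y = 1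

/-- Conditional entropy `H(Y|X‖P)` (base 2) of a joint distribution `P` on `X × Y`. -/
noncomputable def condEnt {X Y : Type*} [Fintype X] [Fintype Y] (P : X × Y → ℝ) : ℝ :=
  -∑ x : X, ∑ y : Y, P (x, y) * Real.logb 2 (P (x, y) / ∑ y' : Y, P (x, y'))

/-- Mutual information `I(U;Y‖P)` (base 2) of a joint distribution `P` on `U × Y`. -/
noncomputable def mutInf {U Y : Type*} [Fintype U] [Fintype Y] (P : U × Y → ℝ) : ℝ :=
  ∑ u : U, ∑ y : Y,
    P (u, y) * Real.logb 2 (P (u, y) / ((∑ y' : Y, P (u, y')) * ∑ u' : U, P (u', y)))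

/-- Channel distance `d(W,W') = max_x ∑_y |W(y|x) − W'(y|x)|`. -/
noncomputable def dChan {X Y : Type*} [Fintype Y] (W W' : X → Y → ℝ) : ℝ :=
  ⨆ x : X, ∑ y : Y, |W x y - W' x y|


lemma phi_subadd {a b : ℝ} (ha : 0 ≤ a) (hb : 0 ≤ b) :
    negMulLog (a + b) ≤ negMulLog a + negMulLog b := by
  rcases eq_or_lt_of_le ha with h | ha'
  · simp [← h]
  rcases eq_or_lt_of_le hb with h | hb'
  · simp [← h]
  have h1 : log a ≤ log (a + b) := Real.log_le_log ha' (by linarith)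
  have h2 : log b ≤ log (a + b) := Real.log_le_log hb' (by linarith)
  simp only [negMulLog, neg_mul]
  nlinarith

lemma phi_decrement {y t : ℝ} (hy : 0 ≤ y) (ht : 0 ≤ t) (hyt : y + t ≤ 1) :
    negMulLog y - negMulLog (y + t) ≤ negMulLog (1 - t) := by
  rcases eq_or_lt_of_le hyt with h | hlt
  · have : t = 1 - y := by linarith
    subst this
    simp only [negMulLog, neg_mul]
    have : (1:ℝ) - (1 - y) = y := by ring
    rw [show y + (1-y) = (1:ℝ) by ring, this]
    simp
  have hd : 0 < 1 - y := by linarith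
  have hle : t ≤ 1 - y := by linarith
  set f : ℝ → ℝ := fun x => x * log x with hf
  have hcx := Real.convexOn_mul_log
  have key1 : f (y + t) ≤ ((1-y-t)/(1-y)) * f y := by
    have hab1 : (1-y-t)/(1-y) + t/(1-y) = 1 := by field_simp; ring
    have := hcx.2 (Set.mem_Ici.2 hy) (Set.mem_Ici.2 (by norm_num : (0:ℝ) ≤ 1))
      (div_nonneg (by linarith) (le_of_lt hd)) (div_nonneg ht (le_of_lt hd)) hab1
    have harg : ((1-y-t)/(1-y)) • y + (t/(1-y)) • (1:ℝ) = y + t := by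
      rw [smul_eq_mul, smul_eq_mul, div_mul_eq_mul_div, div_mul_eq_mul_div, ← add_div, div_eq_iff hd.ne']; ring
    rw [harg] at this
    simpa [smul_eq_mul, hf] using this
  have key2 : f (1 - t) ≤ (t/(1-y)) * f y := by
    have hab2 : t/(1-y) + (1-y-t)/(1-y) = 1 := by field_simp; ring
    have := hcx.2 (Set.mem_Ici.2 hy) (Set.mem_Ici.2 (by norm_num : (0:ℝ) ≤ 1))
      (div_nonneg ht (le_of_lt hd)) (div_nonneg (by linarith) (le_of_lt hd)) hab2
    have harg : (t/(1-y)) • y + ((1-y-t)/(1-y)) • (1:ℝ) = 1 - t := by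
      rw [smul_eq_mul, smul_eq_mul, div_mul_eq_mul_div, div_mul_eq_mul_div, ← add_div, div_eq_iff hd.ne']; ring
    rw [harg] at this
    simpa [smul_eq_mul, hf] using this
  have hsum : f (y + t) + f (1 - t) ≤ f y := by
    have : ((1-y-t)/(1-y)) * f y + (t/(1-y)) * f y = f y := by field_simp; ring
    linarith
  simp only [negMulLog, neg_mul, hf] at *
  linarith

lemma phi_one_sub_le {s : ℝ} (hs : 0 ≤ s) (hs1 : s < 1) : negMulLog (1 - s) ≤ s := by
  have h := Real.one_sub_inv_le_log_of_pos (by linarith : (0:ℝ) < 1 - s)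
  have hpos : (0:ℝ) < 1 - s := by linarith
  simp only [negMulLog, neg_mul]
  have : (1 - s) * (1 - (1-s)⁻¹) ≤ (1 - s) * log (1 - s) :=
    mul_le_mul_of_nonneg_left h (by linarith)
  have heq : (1 - s) * (1 - (1-s)⁻¹) = -s := by field_simp; ring
  linarith [heq ▸ this]

lemma abs_phi_sub_phi {x y : ℝ} (hx0 : 0 ≤ x) (hx1 : x ≤ 1) (hy0 : 0 ≤ y) (hy1 : y ≤ 1) :
    |negMulLog x - negMulLog y| ≤ negMulLog |x - y| + negMulLog (1 - |x - y|) := by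
  have main : ∀ a b : ℝ, 0 ≤ a → a ≤ b → b ≤ 1 →
      |negMulLog b - negMulLog a| ≤ negMulLog (b - a) + negMulLog (1 - (b - a)) := by
    intro a b ha hab hb1
    have ht0 : 0 ≤ b - a := by linarith
    have ht1 : b - a ≤ 1 := by linarith
    have h1 : negMulLog b - negMulLog a ≤ negMulLog (b - a) := by
      have := phi_subadd ha ht0
      rw [show a + (b - a) = b by ring] at this
      linarith
    have h2 : negMulLog a - negMulLog b ≤ negMulLog (1 - (b - a)) := by
      have := phi_decrement ha ht0 (by linarith : a + (b - a) ≤ 1)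
      rw [show a + (b - a) = b by ring] at this
      exact this
    have hp1 : 0 ≤ negMulLog (b - a) := negMulLog_nonneg ht0 ht1
    have hp2 : 0 ≤ negMulLog (1 - (b - a)) := negMulLog_nonneg (by linarith) (by linarith)
    rw [abs_sub_le_iff]
    constructor <;> linarith
  rcases le_total y x with h | h
  · have := main y x hy0 h hx1
    rwa [abs_of_nonneg (by linarith : (0:ℝ) ≤ x - y)]
  · have := main x y hx0 h hy1
    rw [abs_sub_comm x y, abs_of_nonneg (by linarith : (0:ℝ) ≤ y - x)]
    rwa [abs_sub_comm (negMulLog x)]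

lemma psi_mono {a b : ℝ} (ha : 0 ≤ a) (hab : a ≤ b) (hb : b ≤ 1) :
    a + negMulLog a ≤ b + negMulLog b := by
  set g : ℝ → ℝ := fun x => x + negMulLog x with hg
  have hmono : MonotoneOn g (Set.Icc (0:ℝ) 1) := by
    apply monotoneOn_of_deriv_nonneg (convex_Icc 0 1)
    · exact (continuous_id.add continuous_negMulLog).continuousOn
    · intro x hx
      rw [interior_Icc] at hx
      have hx0 : x ≠ 0 := ne_of_gt hx.1
      exact ((hasDerivAt_id x).add (hasDerivAt_negMulLog hx0)).differentiableAt.differentiableWithinAt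
    · intro x hx
      rw [interior_Icc] at hx
      have hx0 : x ≠ 0 := ne_of_gt hx.1
      have hd : deriv g x = 1 + (-log x - 1) :=
        ((hasDerivAt_id x).add (hasDerivAt_negMulLog hx0)).deriv
      rw [hd]
      have : log x ≤ 0 := Real.log_nonpos (le_of_lt hx.1) (le_of_lt hx.2)
      linarith
  exact hmono (Set.mem_Icc.2 ⟨ha, le_trans hab hb⟩) (Set.mem_Icc.2 ⟨le_trans ha hab, hb⟩) hab

noncomputable def ent {Z : Type*} [Fintype Z] (p : Z → ℝ) : ℝ := ∑ z, Real.negMulLog (p z)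

lemma sum_phi_le {Z : Type*} [Fintype Z] (t : Z → ℝ) (ht : ∀ z, 0 ≤ t z) (hZ : Nonempty Z) :
    ∑ z, negMulLog (t z) ≤ (Fintype.card Z : ℝ) * negMulLog ((∑ z, t z) / (Fintype.card Z : ℝ)) := by
  have hc : (0:ℝ) < (Fintype.card Z : ℝ) := by
    exact_mod_cast Fintype.card_pos_iff.2 hZ
  have hjen := concaveOn_negMulLog.le_map_sum (t := (univ : Finset Z))
    (w := fun _ => (Fintype.card Z : ℝ)⁻¹) (p := t)
    (fun i _ => by positivity)
    (by simp [Finset.card_univ])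
    (fun i _ => Set.mem_Ici.2 (ht i))
  simp only [smul_eq_mul] at hjen
  have h1 : ∑ i : Z, (Fintype.card Z : ℝ)⁻¹ * t i = (∑ z, t z) / (Fintype.card Z : ℝ) := by
    rw [← Finset.mul_sum]; ring
  rw [h1] at hjen
  have h2 : ∑ i : Z, (Fintype.card Z : ℝ)⁻¹ * negMulLog (t i)
      = (Fintype.card Z : ℝ)⁻¹ * ∑ z, negMulLog (t z) := by rw [← Finset.mul_sum]
  rw [h2] at hjen
  calc ∑ z, negMulLog (t z)
      = (Fintype.card Z : ℝ) * ((Fintype.card Z : ℝ)⁻¹ * ∑ z, negMulLog (t z)) := by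
        field_simp
    _ ≤ (Fintype.card Z : ℝ) * negMulLog ((∑ z, t z) / (Fintype.card Z : ℝ)) :=
        mul_le_mul_of_nonneg_left hjen (le_of_lt hc)

lemma ent_nonneg {Z : Type*} [Fintype Z] {p : Z → ℝ} (h0 : ∀ z, 0 ≤ p z)
    (h1 : ∑ z, p z = 1) : 0 ≤ ent p := by
  apply Finset.sum_nonneg
  intro z _
  exact negMulLog_nonneg (h0 z)
    (h1 ▸ Finset.single_le_sum (fun i _ => h0 i) (Finset.mem_univ z))

lemma ent_le_log_card {Z : Type*} [Fintype Z] {p : Z → ℝ} (h0 : ∀ z, 0 ≤ p z)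
    (h1 : ∑ z, p z = 1) : ent p ≤ Real.log (Fintype.card Z) := by
  have hZ : Nonempty Z := by
    by_contra h
    rw [not_nonempty_iff] at h
    simp [Finset.univ_eq_empty] at h1
  have hc : (0:ℝ) < (Fintype.card Z : ℝ) := by exact_mod_cast Fintype.card_pos_iff.2 hZ
  have := sum_phi_le p h0 hZ
  rw [h1] at this
  refine le_trans this (le_of_eq ?_)
  rw [negMulLog, Real.log_div one_ne_zero (ne_of_gt hc)]
  field_simp
  simp

/-- Single-letter entropy continuity. -/
lemma ent_cont {Z : Type*} [Fintype Z] {p q : Z → ℝ} {δ : ℝ}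
    (hp0 : ∀ z, 0 ≤ p z) (hp1 : ∑ z, p z = 1)
    (hq0 : ∀ z, 0 ≤ q z) (hq1 : ∑ z, q z = 1)
    (hδ0 : 0 < δ) (hδ1 : δ < 1) (hd : ∑ z, |p z - q z| ≤ δ) :
    |ent p - ent q| ≤ 2 * δ * Real.log (Fintype.card Z)
      + 2 * (negMulLog δ + negMulLog (1 - δ)) := by
  have hZ : Nonempty Z := by
    by_contra h
    rw [not_nonempty_iff] at h
    simp [Finset.univ_eq_empty] at hp1
  have hc1 : (1:ℝ) ≤ (Fintype.card Z : ℝ) := by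
    exact_mod_cast Fintype.card_pos_iff.2 hZ
  have hlogc : 0 ≤ Real.log (Fintype.card Z) := Real.log_nonneg hc1
  have hphid : 0 ≤ negMulLog δ := negMulLog_nonneg (le_of_lt hδ0) (le_of_lt hδ1)
  have hphid' : 0 ≤ negMulLog (1-δ) := negMulLog_nonneg (by linarith) (by linarith)
  rcases le_or_gt (1/2 : ℝ) δ with hhalf | hhalf
  · -- crude bound
    have b1 : 0 ≤ ent p := ent_nonneg hp0 hp1
    have b2 : ent p ≤ Real.log (Fintype.card Z) := ent_le_log_card hp0 hp1
    have b3 : 0 ≤ ent q := ent_nonneg hq0 hq1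
    have b4 : ent q ≤ Real.log (Fintype.card Z) := ent_le_log_card hq0 hq1
    rw [abs_sub_le_iff]
    constructor <;> nlinarith
  · -- refined bound
    have hple : ∀ z, p z ≤ 1 := fun z =>
      hp1 ▸ Finset.single_le_sum (fun i _ => hp0 i) (Finset.mem_univ z)
    have hqle : ∀ z, q z ≤ 1 := fun z =>
      hq1 ▸ Finset.single_le_sum (fun i _ => hq0 i) (Finset.mem_univ z)
    set t : Z → ℝ := fun z => |p z - q z| with hts
    have ht0 : ∀ z, 0 ≤ t z := fun z => abs_nonneg _
    set δ' : ℝ := ∑ z, t z with hδ's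
    have hδ'0 : 0 ≤ δ' := Finset.sum_nonneg fun z _ => ht0 z
    have hδ'δ : δ' ≤ δ := hd
    have htle : ∀ z, t z ≤ δ' := fun z =>
      Finset.single_le_sum (fun i _ => ht0 i) (Finset.mem_univ z)
    have step1 : |ent p - ent q| ≤ ∑ z, (negMulLog (t z) + negMulLog (1 - t z)) := by
      rw [ent, ent, ← Finset.sum_sub_distrib]
      refine le_trans (Finset.abs_sum_le_sum_abs _ _) (Finset.sum_le_sum fun z _ => ?_)
      exact abs_phi_sub_phi (hp0 z) (hple z) (hq0 z) (hqle z)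
    have step2 : ∑ z, (negMulLog (t z) + negMulLog (1 - t z))
        ≤ (∑ z, negMulLog (t z)) + δ' := by
      rw [Finset.sum_add_distrib]
      gcongr with z _
      refine le_trans (Finset.sum_le_sum fun z _ => phi_one_sub_le (ht0 z)
        (lt_of_le_of_lt (le_trans (htle z) hδ'δ) hδ1)) le_rfl
    rcases eq_or_lt_of_le hδ'0 with hz | hδ'pos
    · -- δ' = 0 : p = q
      have : ∀ z, t z = 0 := by
        intro z
        have := (Finset.sum_eq_zero_iff_of_nonneg (fun i _ => ht0 i)).1 hz.symm z (Finset.mem_univ z)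
        exact this
      have hpq : p = q := by
        funext z
        have := this z
        rw [hts] at this
        simp only [abs_eq_zero, sub_eq_zero] at this
        exact this
      rw [hpq, sub_self, abs_zero]
      positivity
    have step3 : ∑ z, negMulLog (t z) ≤ δ' * Real.log (Fintype.card Z) + negMulLog δ' := by
      have := sum_phi_le t ht0 hZ
      rw [← hδ's] at this
      refine le_trans this (le_of_eq ?_)
      have hc0 : (Fintype.card Z : ℝ) ≠ 0 := by positivity
      rw [negMulLog, negMulLog, Real.log_div (ne_of_gt hδ'pos) hc0]
      field_simp
      ring
    have step4 : negMulLog δ' + δ' ≤ negMulLog δ + δ :=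
      by have := psi_mono (le_of_lt hδ'pos) hδ'δ (le_of_lt hδ1); linarith
    have step5 : δ ≤ 2 * negMulLog (1 - δ) := by
      have hlog : Real.log (1 - δ) ≤ -δ := by
        have := Real.log_le_sub_one_of_pos (by linarith : (0:ℝ) < 1 - δ)
        linarith
      have : δ * (1 - δ) ≤ negMulLog (1 - δ) := by
        rw [negMulLog, neg_mul]
        nlinarith
      nlinarith
    have hδ'logc : δ' * Real.log (Fintype.card Z) ≤ δ * Real.log (Fintype.card Z) :=
      mul_le_mul_of_nonneg_right hδ'δ hlogc
    calc |ent p - ent q| ≤ (∑ z, negMulLog (t z)) + δ' := le_trans step1 step2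
      _ ≤ δ' * Real.log (Fintype.card Z) + (negMulLog δ' + δ') := by linarith
      _ ≤ δ * Real.log (Fintype.card Z) + (negMulLog δ + δ) := by linarith
      _ ≤ 2 * δ * Real.log (Fintype.card Z) + 2 * (negMulLog δ + negMulLog (1 - δ)) := by
          nlinarith

lemma ent_cont_scaled {Z : Type*} [Fintype Z] {f g : Z → ℝ} {m ε : ℝ}
    (hf0 : ∀ z, 0 ≤ f z) (hg0 : ∀ z, 0 ≤ g z)
    (hfs : ∑ z, f z = m) (hgs : ∑ z, g z = m)
    (hε0 : 0 < ε) (hε1 : ε < 1) (hd : ∑ z, |f z - g z| ≤ ε * m) :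
    |(∑ z, negMulLog (f z)) - ∑ z, negMulLog (g z)| ≤
      m * (2*ε*Real.log (Fintype.card Z) + 2*(negMulLog ε + negMulLog (1-ε))) := by
  have hm0 : 0 ≤ m := hfs ▸ Finset.sum_nonneg fun z _ => hf0 z
  rcases eq_or_lt_of_le hm0 with hm | hm
  · have hfz : ∀ z, f z = 0 := fun z =>
      (Finset.sum_eq_zero_iff_of_nonneg (fun i _ => hf0 i)).1 (hfs.trans hm.symm) z (Finset.mem_univ z)
    have hgz : ∀ z, g z = 0 := fun z =>
      (Finset.sum_eq_zero_iff_of_nonneg (fun i _ => hg0 i)).1 (hgs.trans hm.symm) z (Finset.mem_univ z)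
    simp [hfz, hgz, ← hm]
  · set p : Z → ℝ := fun z => f z / m with hp
    set q : Z → ℝ := fun z => g z / m with hq
    have hp0 : ∀ z, 0 ≤ p z := fun z => div_nonneg (hf0 z) (le_of_lt hm)
    have hq0 : ∀ z, 0 ≤ q z := fun z => div_nonneg (hg0 z) (le_of_lt hm)
    have hp1 : ∑ z, p z = 1 := by
      simp only [hp, div_eq_mul_inv, ← Finset.sum_mul, hfs]
      field_simp
    have hq1 : ∑ z, q z = 1 := by
      simp only [hq, div_eq_mul_inv, ← Finset.sum_mul, hgs]
      field_simp
    have hdpq : ∑ z, |p z - q z| ≤ ε := by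
      have : ∀ z, |p z - q z| = |f z - g z| / m := by
        intro z
        rw [hp, hq, div_sub_div_same, abs_div, abs_of_pos hm]
      rw [Finset.sum_congr rfl fun z _ => this z, ← Finset.sum_div]
      rw [div_le_iff₀ hm]
      linarith [hd]
    have key := ent_cont hp0 hp1 hq0 hq1 hε0 hε1 hdpq
    have hfm : ∀ z, f z = m * p z := fun z => by rw [hp]; field_simp
    have hgm : ∀ z, g z = m * q z := fun z => by rw [hq]; field_simp
    have hsum : ∀ (u : Z → ℝ), (∑ z, negMulLog (m * u z)) =
        negMulLog m * (∑ z, u z) + m * ∑ z, negMulLog (u z) := by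
      intro u
      rw [Finset.mul_sum, Finset.mul_sum, ← Finset.sum_add_distrib]
      refine Finset.sum_congr rfl fun z _ => ?_
      rw [negMulLog_mul]
      ring
    have e1 : (∑ z, negMulLog (f z)) = negMulLog m + m * ent p := by
      calc ∑ z, negMulLog (f z) = ∑ z, negMulLog (m * p z) :=
            Finset.sum_congr rfl fun z _ => by rw [← hfm z]
        _ = negMulLog m * (∑ z, p z) + m * ∑ z, negMulLog (p z) := hsum p
        _ = negMulLog m + m * ent p := by rw [hp1, ent]; ring
    have e2 : (∑ z, negMulLog (g z)) = negMulLog m + m * ent q := by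
      calc ∑ z, negMulLog (g z) = ∑ z, negMulLog (m * q z) :=
            Finset.sum_congr rfl fun z _ => by rw [← hgm z]
        _ = negMulLog m * (∑ z, q z) + m * ∑ z, negMulLog (q z) := hsum q
        _ = negMulLog m + m * ent q := by rw [hq1, ent]; ring
    rw [e1, e2, show (negMulLog m + m * ent p) - (negMulLog m + m * ent q)
        = m * (ent p - ent q) by ring, abs_mul, abs_of_pos hm]
    exact mul_le_mul_of_nonneg_left key hm0

lemma prod_split {M : Type*} [CommMonoid M] {n : ℕ} (j : Fin n) (g : Fin n → M) :
    ∏ m, g m = g j * ∏ m : {m : Fin n // m ≠ j}, g m.val := by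
  rw [← Finset.mul_prod_erase univ g (Finset.mem_univ j)]
  congr 1
  exact Finset.prod_subtype (p := fun m => m ≠ j) (univ.erase j) (fun x => by simp) g

lemma splitAt_symm_at {n : ℕ} {Z : Type*} (j : Fin n) (ζ : Z)
    (r : {m : Fin n // m ≠ j} → Z) :
    (Equiv.funSplitAt j Z).symm (ζ, r) j = ζ := by
  simp [Equiv.funSplitAt, Equiv.piSplitAt]

lemma splitAt_symm_ne {n : ℕ} {Z : Type*} (j : Fin n) (ζ : Z)
    (r : {m : Fin n // m ≠ j} → Z) (m : {m : Fin n // m ≠ j}) :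
    (Equiv.funSplitAt j Z).symm (ζ, r) m.val = r m := by
  simp only [Equiv.funSplitAt, Equiv.piSplitAt, Equiv.coe_fn_symm_mk]
  rw [dif_neg m.2]

lemma sum_prod_fn {R Z : Type*} [Fintype R] [DecidableEq R] [Fintype Z] (h : R → Z → ℝ) :
    ∑ r : R → Z, ∏ m, h m (r m) = ∏ m, ∑ z, h m z := by
  rw [Finset.prod_univ_sum, Fintype.piFinset_univ]

set_option maxHeartbeats 1000000 in
lemma ent_step {X Z : Type*} [Fintype X] [Fintype Z] {n : ℕ} (j : Fin n)
    (A B : Fin n → X → Z → ℝ) (hA : ∀ m, IsChannel (A m)) (hB : ∀ m, IsChannel (B m))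
    (hagree : ∀ m, m ≠ j → A m = B m)
    {ε : ℝ} (hε0 : 0 < ε) (hε1 : ε < 1)
    (hj : ∀ x, ∑ z, |A j x z - B j x z| ≤ ε)
    (w : (Fin n → X) → ℝ) (hw : ∀ x, 0 ≤ w x) (hw1 : ∑ x, w x = 1) :
    |ent (fun z : Fin n → Z => ∑ x, w x * ∏ m, A m (x m) (z m)) -
     ent (fun z : Fin n → Z => ∑ x, w x * ∏ m, B m (x m) (z m))| ≤
      2*ε*Real.log (Fintype.card Z) + 2*(negMulLog ε + negMulLog (1-ε)) := by
  classical
  set e := Equiv.funSplitAt j Z with he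
  set rest : (Fin n → X) → ({m : Fin n // m ≠ j} → Z) → ℝ :=
    fun x r => ∏ m : {m : Fin n // m ≠ j}, A m.val (x m.val) (r m) with hrest
  have hrest0 : ∀ x r, 0 ≤ rest x r := fun x r =>
    Finset.prod_nonneg fun m _ => (hA m.val (x m.val)).1 (r m)
  set f : ({m : Fin n // m ≠ j} → Z) → Z → ℝ := fun r ζ => ∑ x, w x * (A j (x j) ζ * rest x r) with hf
  set g : ({m : Fin n // m ≠ j} → Z) → Z → ℝ := fun r ζ => ∑ x, w x * (B j (x j) ζ * rest x r) with hg
  set mR : ({m : Fin n // m ≠ j} → Z) → ℝ := fun r => ∑ x, w x * rest x r with hmR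
  have hmR0 : ∀ r, 0 ≤ mR r := fun r =>
    Finset.sum_nonneg fun x _ => mul_nonneg (hw x) (hrest0 x r)
  have hf0 : ∀ r ζ, 0 ≤ f r ζ := fun r ζ =>
    Finset.sum_nonneg fun x _ => mul_nonneg (hw x)
      (mul_nonneg ((hA j (x j)).1 ζ) (hrest0 x r))
  have hg0 : ∀ r ζ, 0 ≤ g r ζ := fun r ζ =>
    Finset.sum_nonneg fun x _ => mul_nonneg (hw x)
      (mul_nonneg ((hB j (x j)).1 ζ) (hrest0 x r))
  have hfs : ∀ r, ∑ ζ, f r ζ = mR r := by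
    intro r
    rw [hf, Finset.sum_comm]
    refine Finset.sum_congr rfl fun x _ => ?_
    rw [← Finset.mul_sum, ← Finset.sum_mul, (hA j (x j)).2]
    ring
  have hgs : ∀ r, ∑ ζ, g r ζ = mR r := by
    intro r
    rw [hg, Finset.sum_comm]
    refine Finset.sum_congr rfl fun x _ => ?_
    rw [← Finset.mul_sum, ← Finset.sum_mul, (hB j (x j)).2]
    ring
  have hfg : ∀ r, ∑ ζ, |f r ζ - g r ζ| ≤ ε * mR r := by
    intro r
    have hpt : ∀ ζ, |f r ζ - g r ζ| ≤ ∑ x, w x * (|A j (x j) ζ - B j (x j) ζ| * rest x r) := by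
      intro ζ
      rw [hf, hg, ← Finset.sum_sub_distrib]
      refine le_trans (Finset.abs_sum_le_sum_abs _ _) (Finset.sum_le_sum fun x _ => ?_)
      rw [show w x * (A j (x j) ζ * rest x r) - w x * (B j (x j) ζ * rest x r)
          = w x * ((A j (x j) ζ - B j (x j) ζ) * rest x r) by ring, abs_mul, abs_mul,
        abs_of_nonneg (hw x), abs_of_nonneg (hrest0 x r)]
    calc ∑ ζ, |f r ζ - g r ζ|
        ≤ ∑ ζ, ∑ x, w x * (|A j (x j) ζ - B j (x j) ζ| * rest x r) :=
          Finset.sum_le_sum fun ζ _ => hpt ζ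
      _ = ∑ x, w x * rest x r * ∑ ζ, |A j (x j) ζ - B j (x j) ζ| := by
          rw [Finset.sum_comm]
          refine Finset.sum_congr rfl fun x _ => ?_
          rw [Finset.mul_sum]
          exact Finset.sum_congr rfl fun ζ _ => by ring
      _ ≤ ∑ x, w x * rest x r * ε :=
          Finset.sum_le_sum fun x _ => mul_le_mul_of_nonneg_left (hj (x j))
            (mul_nonneg (hw x) (hrest0 x r))
      _ = ε * mR r := by rw [← Finset.sum_mul, mul_comm]
  have hmR1 : ∑ r, mR r = 1 := by
    rw [hmR, Finset.sum_comm, ← hw1]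
    refine Finset.sum_congr rfl fun x _ => ?_
    rw [← Finset.mul_sum, hrest]
    have : ∑ r : {m : Fin n // m ≠ j} → Z, ∏ m : {m : Fin n // m ≠ j}, A m.val (x m.val) (r m) = ∏ m : {m : Fin n // m ≠ j}, ∑ z, A m.val (x m.val) z :=
      sum_prod_fn (R := {m : Fin n // m ≠ j}) (fun m z => A m.val (x m.val) z)
    rw [this, Finset.prod_congr rfl fun m _ => (hA m.val (x m.val)).2, Finset.prod_const_one,
      mul_one]
  have hevalA : ∀ (ζ : Z) (r : {m : Fin n // m ≠ j} → Z) (x : Fin n → X),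
      (∏ m, A m (x m) ((e.symm (ζ, r)) m)) = A j (x j) ζ * rest x r := by
    intro ζ r x
    rw [prod_split j (fun m => A m (x m) ((e.symm (ζ, r)) m)), splitAt_symm_at]
    congr 1
    exact Finset.prod_congr rfl fun m _ => by rw [splitAt_symm_ne]
  have hevalB : ∀ (ζ : Z) (r : {m : Fin n // m ≠ j} → Z) (x : Fin n → X),
      (∏ m, B m (x m) ((e.symm (ζ, r)) m)) = B j (x j) ζ * rest x r := by
    intro ζ r x
    rw [prod_split j (fun m => B m (x m) ((e.symm (ζ, r)) m)), splitAt_symm_at]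
    congr 1
    refine Finset.prod_congr rfl fun m _ => ?_
    rw [splitAt_symm_ne, ← hagree m.val m.2]
  have hentA : ent (fun z : Fin n → Z => ∑ x, w x * ∏ m, A m (x m) (z m))
      = ∑ r, ∑ ζ, negMulLog (f r ζ) := by
    rw [ent, ← Equiv.sum_comp e.symm
      (fun z : Fin n → Z => negMulLog (∑ x, w x * ∏ m, A m (x m) (z m))),
      Fintype.sum_prod_type, Finset.sum_comm]
    refine Finset.sum_congr rfl fun r _ => Finset.sum_congr rfl fun ζ _ => ?_
    congr 1
    exact Finset.sum_congr rfl fun x _ => by rw [hevalA ζ r x]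
  have hentB : ent (fun z : Fin n → Z => ∑ x, w x * ∏ m, B m (x m) (z m))
      = ∑ r, ∑ ζ, negMulLog (g r ζ) := by
    rw [ent, ← Equiv.sum_comp e.symm
      (fun z : Fin n → Z => negMulLog (∑ x, w x * ∏ m, B m (x m) (z m))),
      Fintype.sum_prod_type, Finset.sum_comm]
    refine Finset.sum_congr rfl fun r _ => Finset.sum_congr rfl fun ζ _ => ?_
    congr 1
    exact Finset.sum_congr rfl fun x _ => by rw [hevalB ζ r x]
  rw [hentA, hentB, ← Finset.sum_sub_distrib]
  calc |∑ r, ((∑ ζ, negMulLog (f r ζ)) - ∑ ζ, negMulLog (g r ζ))|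
      ≤ ∑ r, |(∑ ζ, negMulLog (f r ζ)) - ∑ ζ, negMulLog (g r ζ)| :=
        Finset.abs_sum_le_sum_abs _ _
    _ ≤ ∑ r, mR r * (2*ε*Real.log (Fintype.card Z) + 2*(negMulLog ε + negMulLog (1-ε))) :=
        Finset.sum_le_sum fun r _ => ent_cont_scaled (hf0 r) (hg0 r) (hfs r) (hgs r)
          hε0 hε1 (hfg r)
    _ = 2*ε*Real.log (Fintype.card Z) + 2*(negMulLog ε + negMulLog (1-ε)) := by
        rw [← Finset.sum_mul, hmR1, one_mul]

set_option maxHeartbeats 1000000 in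
lemma ent_prod_cont {X Z : Type*} [Fintype X] [Fintype Z] {n : ℕ}
    (V V' : Fin n → X → Z → ℝ) (hV : ∀ m, IsChannel (V m)) (hV' : ∀ m, IsChannel (V' m))
    {ε : ℝ} (hε0 : 0 < ε) (hε1 : ε < 1)
    (hd : ∀ m x, ∑ z, |V m x z - V' m x z| ≤ ε)
    (w : (Fin n → X) → ℝ) (hw : ∀ x, 0 ≤ w x) (hw1 : ∑ x, w x = 1) :
    |ent (fun z : Fin n → Z => ∑ x, w x * ∏ m, V m (x m) (z m)) -
     ent (fun z : Fin n → Z => ∑ x, w x * ∏ m, V' m (x m) (z m))| ≤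
      (n : ℝ) * (2*ε*Real.log (Fintype.card Z) + 2*(negMulLog ε + negMulLog (1-ε))) := by
  classical
  set K := 2*ε*Real.log (Fintype.card Z) + 2*(negMulLog ε + negMulLog (1-ε)) with hK
  set W : ℕ → Fin n → X → Z → ℝ := fun k m => if (m : ℕ) < k then V' m else V m with hW
  have hWch : ∀ k m, IsChannel (W k m) := by
    intro k m
    rw [hW]
    dsimp only
    split_ifs
    · exact hV' m
    · exact hV m
  have claim : ∀ k, k ≤ n →
      |ent (fun z : Fin n → Z => ∑ x, w x * ∏ m, W k m (x m) (z m)) -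
       ent (fun z : Fin n → Z => ∑ x, w x * ∏ m, W 0 m (x m) (z m))| ≤ (k : ℝ) * K := by
    intro k
    induction k with
    | zero => intro _; simp
    | succ k ih =>
      intro hk
      have hk' : k ≤ n := Nat.le_of_succ_le hk
      have hkn : k < n := hk
      set j : Fin n := ⟨k, hkn⟩ with hj
      have hagree : ∀ m, m ≠ j → W (k+1) m = W k m := by
        intro m hm
        have hne : (m : ℕ) ≠ k := fun h => hm (Fin.ext h)
        have hcond : ((m : ℕ) < k + 1) ↔ ((m : ℕ) < k) := by omega
        rw [hW]
        simp only [hcond]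
      have hjd : ∀ x, ∑ z, |W (k+1) j x z - W k j x z| ≤ ε := by
        intro x
        have h1 : W (k+1) j = V' j := by
          rw [hW]; simp [hj]
        have h2 : W k j = V j := by
          rw [hW]; simp [hj]
        rw [h1, h2]
        refine le_trans (le_of_eq (Finset.sum_congr rfl fun z _ => abs_sub_comm _ _)) (hd j x)
      have hstep := ent_step j (W (k+1)) (W k) (hWch (k+1)) (hWch k) hagree hε0 hε1 hjd w hw hw1
      rw [← hK] at hstep
      calc |ent (fun z : Fin n → Z => ∑ x, w x * ∏ m, W (k+1) m (x m) (z m)) -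
            ent (fun z : Fin n → Z => ∑ x, w x * ∏ m, W 0 m (x m) (z m))|
          ≤ |ent (fun z : Fin n → Z => ∑ x, w x * ∏ m, W (k+1) m (x m) (z m)) -
             ent (fun z : Fin n → Z => ∑ x, w x * ∏ m, W k m (x m) (z m))| +
            |ent (fun z : Fin n → Z => ∑ x, w x * ∏ m, W k m (x m) (z m)) -
             ent (fun z : Fin n → Z => ∑ x, w x * ∏ m, W 0 m (x m) (z m))| := abs_sub_le _ _ _
        _ ≤ K + (k : ℝ) * K := add_le_add hstep (ih hk')
        _ = ((k + 1 : ℕ) : ℝ) * K := by push_cast; ring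
  have hW0 : W 0 = V := by funext m; rw [hW]; simp
  have hWn : W n = V' := by funext m; rw [hW]; simp [m.isLt]
  have := claim n le_rfl
  rw [hW0, hWn] at this
  calc |ent (fun z : Fin n → Z => ∑ x, w x * ∏ m, V m (x m) (z m)) -
        ent (fun z : Fin n → Z => ∑ x, w x * ∏ m, V' m (x m) (z m))|
      = |ent (fun z : Fin n → Z => ∑ x, w x * ∏ m, V' m (x m) (z m)) -
        ent (fun z : Fin n → Z => ∑ x, w x * ∏ m, V m (x m) (z m))| := abs_sub_comm _ _
    _ ≤ (n : ℝ) * K := this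

set_option maxHeartbeats 1000000 in
lemma mutInf_decomp {U Zn : Type*} [Fintype U] [Fintype Zn] [Nonempty U]
    (Q : U → Zn → ℝ) (hQ0 : ∀ u z, 0 ≤ Q u z) (hQ1 : ∀ u, ∑ z, Q u z = 1) :
    mutInf (fun p : U × Zn => Q p.1 p.2 * ((Fintype.card U : ℝ))⁻¹)
      = (ent (fun z => (Fintype.card U : ℝ)⁻¹ * ∑ u, Q u z)
          - (Fintype.card U : ℝ)⁻¹ * ∑ u, ent (Q u)) / Real.log 2 := by
  have hN : (0:ℝ) < (Fintype.card U : ℝ) := by exact_mod_cast Fintype.card_pos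
  set N := (Fintype.card U : ℝ) with hNd
  set Qb : Zn → ℝ := fun z => N⁻¹ * ∑ u, Q u z with hQb
  have hmargU : ∀ u, (∑ z, Q u z * N⁻¹) = N⁻¹ := by
    intro u; rw [← Finset.sum_mul, hQ1, one_mul]
  have hmargZ : ∀ z, (∑ u, Q u z * N⁻¹) = Qb z := by
    intro z; rw [← Finset.sum_mul, hQb, mul_comm]
  have key : ∀ u z, (Q u z * N⁻¹) *
        Real.logb 2 ((Q u z * N⁻¹) / ((∑ z', Q u z' * N⁻¹) * (∑ u', Q u' z * N⁻¹)))
      = N⁻¹ * (Q u z * Real.logb 2 (Q u z) - Q u z * Real.logb 2 (Qb z)) := by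
    intro u z
    rw [hmargU u, hmargZ z]
    rcases eq_or_lt_of_le (hQ0 u z) with h0 | hpos
    · rw [← h0]; simp
    · have hle : Q u z ≤ ∑ u', Q u' z :=
        Finset.single_le_sum (fun i _ => hQ0 i z) (Finset.mem_univ u)
      have hQbpos : 0 < Qb z := by
        rw [hQb]
        exact mul_pos (inv_pos.2 hN) (lt_of_lt_of_le hpos hle)
      have harg : (Q u z * N⁻¹) / (N⁻¹ * Qb z) = Q u z / Qb z := by
        rw [mul_comm N⁻¹ (Qb z), mul_div_mul_right _ _ (inv_ne_zero (ne_of_gt hN))]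
      rw [harg, Real.logb_div (ne_of_gt hpos) (ne_of_gt hQbpos)]
      ring
  have e1 : ∀ x : ℝ, x * Real.logb 2 x = -Real.negMulLog x / Real.log 2 := fun x => by
    rw [Real.logb, Real.negMulLog]; ring
  have hlog2 : Real.log 2 ≠ 0 := ne_of_gt (Real.log_pos one_lt_two)
  simp only [mutInf]
  rw [Finset.sum_congr rfl fun u _ => Finset.sum_congr rfl fun z _ => key u z]
  have hsplit : ∀ u, ∑ z, N⁻¹ * (Q u z * Real.logb 2 (Q u z) - Q u z * Real.logb 2 (Qb z))
      = (∑ z, N⁻¹ * (Q u z * Real.logb 2 (Q u z)))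
        - ∑ z, N⁻¹ * (Q u z * Real.logb 2 (Qb z)) := by
    intro u
    rw [← Finset.sum_sub_distrib]
    exact Finset.sum_congr rfl fun z _ => by ring
  rw [Finset.sum_congr rfl fun u _ => hsplit u, Finset.sum_sub_distrib]
  have t1 : ∀ u, ∑ z, N⁻¹ * (Q u z * Real.logb 2 (Q u z))
      = N⁻¹ * (-ent (Q u)) / Real.log 2 := by
    intro u
    simp only [e1]
    rw [ent]
    rw [Finset.sum_congr rfl (fun z (_ : z ∈ univ) =>
      show N⁻¹ * (-Real.negMulLog (Q u z) / Real.log 2)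
        = (N⁻¹ / Real.log 2) * (-Real.negMulLog (Q u z)) by ring)]
    rw [← Finset.mul_sum, ← Finset.sum_neg_distrib]
    ring
  have t2 : ∀ z, ∑ u, N⁻¹ * (Q u z * Real.logb 2 (Qb z)) = Qb z * Real.logb 2 (Qb z) := by
    intro z
    calc ∑ u, N⁻¹ * (Q u z * Real.logb 2 (Qb z))
        = ∑ u, Q u z * (N⁻¹ * Real.logb 2 (Qb z)) :=
          Finset.sum_congr rfl fun u _ => by ring
      _ = (∑ u, Q u z) * (N⁻¹ * Real.logb 2 (Qb z)) := (Finset.sum_mul _ _ _).symm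
      _ = Qb z * Real.logb 2 (Qb z) := by rw [hQb]; ring
  rw [Finset.sum_congr rfl fun u (_ : u ∈ univ) => t1 u]
  rw [Finset.sum_comm, Finset.sum_congr rfl fun z (_ : z ∈ univ) => t2 z]
  have t3 : ∑ z, Qb z * Real.logb 2 (Qb z) = -ent Qb / Real.log 2 := by
    simp only [e1]
    rw [ent, Finset.sum_congr rfl (fun z (_ : z ∈ univ) =>
      show -Real.negMulLog (Qb z) / Real.log 2
        = (Real.log 2)⁻¹ * (-Real.negMulLog (Qb z)) by ring)]
    rw [← Finset.mul_sum, ← Finset.sum_neg_distrib]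
    ring
  have t4 : ∑ u, N⁻¹ * (-ent (Q u)) / Real.log 2
      = -(N⁻¹ * ∑ u, ent (Q u)) / Real.log 2 := by
    rw [← Finset.sum_div, ← Finset.mul_sum, Finset.sum_neg_distrib]
    ring
  rw [t3, t4]
  ring

set_option maxHeartbeats 1000000 in
/-- continuity of multi-letter mutual information for time-varying channels. -/
theorem mutual_information_time_varying_continuity {X Z U : Type*}
    [Fintype X] [Fintype Z] [Fintype U] [Nonempty U]
    {ε : ℝ} (hε : ε ∈ Set.Ioo (0 : ℝ) 1) (n : ℕ)
    (V V' : Fin n → X → Z → ℝ)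
    (hV : ∀ m, IsChannel (V m)) (hV' : ∀ m, IsChannel (V' m))
    (hd : ∀ m, dChan (V m) (V' m) ≤ ε)
    (E : U → (Fin n → X) → ℝ)
    (hE : ∀ u, (∀ xn, 0 ≤ E u xn) ∧ ∑ xn : Fin n → X, E u xn = 1) :
    |mutInf (fun p : U × (Fin n → Z) =>
        ∑ xn : Fin n → X, (∏ m : Fin n, V m (xn m) (p.2 m)) * E p.1 xn *
          ((Fintype.card U : ℝ))⁻¹) -
      mutInf (fun p : U × (Fin n → Z) =>
        ∑ xn : Fin n → X, (∏ m : Fin n, V' m (xn m) (p.2 m)) * E p.1 xn *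
          ((Fintype.card U : ℝ))⁻¹)| ≤
      (n : ℝ) * (4 * ε * Real.logb 2 (Fintype.card Z) + 4 * H2 ε) := by
  obtain ⟨hε0, hε1⟩ := hε
  classical
  have hN : (0:ℝ) < (Fintype.card U : ℝ) := by exact_mod_cast Fintype.card_pos
  set N := (Fintype.card U : ℝ) with hNd
  set K := 2*ε*Real.log (Fintype.card Z) + 2*(negMulLog ε + negMulLog (1-ε)) with hK
  set L := Real.log 2 with hL
  have hLpos : 0 < L := Real.log_pos one_lt_two
  set Q : U → (Fin n → Z) → ℝ := fun u z => ∑ x, E u x * ∏ m, V m (x m) (z m) with hQ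
  set Q' : U → (Fin n → Z) → ℝ := fun u z => ∑ x, E u x * ∏ m, V' m (x m) (z m) with hQ'
  -- rewrite the mutInf arguments
  have harg : (fun p : U × (Fin n → Z) =>
      ∑ xn : Fin n → X, (∏ m : Fin n, V m (xn m) (p.2 m)) * E p.1 xn * N⁻¹)
      = fun p : U × (Fin n → Z) => Q p.1 p.2 * N⁻¹ := by
    funext p
    rw [hQ, Finset.sum_mul]
    exact Finset.sum_congr rfl fun x _ => by ring
  have harg' : (fun p : U × (Fin n → Z) =>
      ∑ xn : Fin n → X, (∏ m : Fin n, V' m (xn m) (p.2 m)) * E p.1 xn * N⁻¹)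
      = fun p : U × (Fin n → Z) => Q' p.1 p.2 * N⁻¹ := by
    funext p
    rw [hQ', Finset.sum_mul]
    exact Finset.sum_congr rfl fun x _ => by ring
  -- row-wise channel distance
  have hdrow : ∀ m x, ∑ z, |V m x z - V' m x z| ≤ ε := by
    intro m x
    refine le_trans ?_ (hd m)
    rw [dChan]
    exact le_ciSup (f := fun x => ∑ z, |V m x z - V' m x z|)
      (Set.Finite.bddAbove (Set.finite_range _)) x
  -- basic facts about Q
  have hprod1 : ∀ (A : Fin n → X → Z → ℝ), (∀ m, IsChannel (A m)) → ∀ x : Fin n → X,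
      ∑ z : Fin n → Z, ∏ m, A m (x m) (z m) = 1 := by
    intro A hA x
    rw [sum_prod_fn (R := Fin n) (fun m ζ => A m (x m) ζ),
      Finset.prod_congr rfl fun m _ => (hA m (x m)).2, Finset.prod_const_one]
  have hQsum : ∀ (A : Fin n → X → Z → ℝ), (∀ m, IsChannel (A m)) → ∀ u,
      (∑ z : Fin n → Z, ∑ x, E u x * ∏ m, A m (x m) (z m)) = 1 := by
    intro A hA u
    rw [Finset.sum_comm]
    calc ∑ x, ∑ z : Fin n → Z, E u x * ∏ m, A m (x m) (z m)
        = ∑ x, E u x := Finset.sum_congr rfl fun x _ => by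
          rw [← Finset.mul_sum, hprod1 A hA x, mul_one]
      _ = 1 := (hE u).2
  have hQ0 : ∀ u z, 0 ≤ Q u z := fun u z =>
    Finset.sum_nonneg fun x _ => mul_nonneg ((hE u).1 x)
      (Finset.prod_nonneg fun m _ => (hV m (x m)).1 (z m))
  have hQ'0 : ∀ u z, 0 ≤ Q' u z := fun u z =>
    Finset.sum_nonneg fun x _ => mul_nonneg ((hE u).1 x)
      (Finset.prod_nonneg fun m _ => (hV' m (x m)).1 (z m))
  have hQ1 : ∀ u, ∑ z, Q u z = 1 := fun u => hQsum V hV u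
  have hQ'1 : ∀ u, ∑ z, Q' u z = 1 := fun u => hQsum V' hV' u
  rw [harg, harg', mutInf_decomp Q hQ0 hQ1, mutInf_decomp Q' hQ'0 hQ'1, ← hNd, ← hL]
  -- per-user entropy bound
  have huser : ∀ u, |ent (Q u) - ent (Q' u)| ≤ (n : ℝ) * K := by
    intro u
    have e1 : Q u = fun z : Fin n → Z => ∑ x, E u x * ∏ m, V m (x m) (z m) := by rw [hQ]
    have e2 : Q' u = fun z : Fin n → Z => ∑ x, E u x * ∏ m, V' m (x m) (z m) := by rw [hQ']
    rw [e1, e2, hK]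
    exact ent_prod_cont V V' hV hV' hε0 hε1 hdrow (E u) (hE u).1 (hE u).2
  -- averaged weight
  set w : (Fin n → X) → ℝ := fun x => N⁻¹ * ∑ u, E u x with hw
  have hw0 : ∀ x, 0 ≤ w x := fun x => mul_nonneg (inv_nonneg.2 (le_of_lt hN))
    (Finset.sum_nonneg fun u _ => (hE u).1 x)
  have hw1 : ∑ x, w x = 1 := by
    rw [hw, ← Finset.mul_sum, Finset.sum_comm]
    rw [Finset.sum_congr rfl fun u (_ : u ∈ univ) => (hE u).2]
    rw [Finset.sum_const, Finset.card_univ, nsmul_eq_mul, mul_one, ← hNd]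
    field_simp
  have hbarmix : ∀ (A : Fin n → X → Z → ℝ),
      (fun z : Fin n → Z => N⁻¹ * ∑ u, ∑ x, E u x * ∏ m, A m (x m) (z m))
      = fun z : Fin n → Z => ∑ x, w x * ∏ m, A m (x m) (z m) := by
    intro A
    funext z
    rw [Finset.sum_comm, Finset.mul_sum]
    refine Finset.sum_congr rfl fun x _ => ?_
    simp only [hw]
    rw [← Finset.sum_mul, ← mul_assoc]
  have hbar : |ent (fun z => N⁻¹ * ∑ u, Q u z) - ent (fun z => N⁻¹ * ∑ u, Q' u z)|
      ≤ (n : ℝ) * K := by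
    have e1 : (fun z : Fin n → Z => N⁻¹ * ∑ u, Q u z)
        = fun z : Fin n → Z => ∑ x, w x * ∏ m, V m (x m) (z m) := by
      rw [hQ]; exact hbarmix V
    have e2 : (fun z : Fin n → Z => N⁻¹ * ∑ u, Q' u z)
        = fun z : Fin n → Z => ∑ x, w x * ∏ m, V' m (x m) (z m) := by
      rw [hQ']; exact hbarmix V'
    rw [e1, e2, hK]
    exact ent_prod_cont V V' hV hV' hε0 hε1 hdrow w hw0 hw1
  -- combine
  set A1 := ent (fun z : Fin n → Z => N⁻¹ * ∑ u, Q u z) with hA1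
  set A2 := ent (fun z : Fin n → Z => N⁻¹ * ∑ u, Q' u z) with hA2
  set B1 := N⁻¹ * ∑ u, ent (Q u) with hB1
  set B2 := N⁻¹ * ∑ u, ent (Q' u) with hB2
  have hquot : (A1 - B1) / L - (A2 - B2) / L = ((A1 - A2) - (B1 - B2)) / L := by ring
  rw [hquot, abs_div, abs_of_pos hLpos]
  have hBdiff : |B1 - B2| ≤ (n : ℝ) * K := by
    rw [hB1, hB2, ← mul_sub, ← Finset.sum_sub_distrib, abs_mul,
      abs_of_pos (inv_pos.2 hN)]
    calc N⁻¹ * |∑ u, (ent (Q u) - ent (Q' u))|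
        ≤ N⁻¹ * ∑ u, |ent (Q u) - ent (Q' u)| :=
          mul_le_mul_of_nonneg_left (Finset.abs_sum_le_sum_abs _ _)
            (inv_nonneg.2 (le_of_lt hN))
      _ ≤ N⁻¹ * ∑ _u : U, (n : ℝ) * K :=
          mul_le_mul_of_nonneg_left (Finset.sum_le_sum fun u _ => huser u)
            (inv_nonneg.2 (le_of_lt hN))
      _ = (n : ℝ) * K := by
          rw [Finset.sum_const, Finset.card_univ, nsmul_eq_mul, ← hNd]
          field_simp
  have hnum : |(A1 - A2) - (B1 - B2)| ≤ 2 * ((n : ℝ) * K) := by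
    calc |(A1 - A2) - (B1 - B2)| ≤ |A1 - A2| + |B1 - B2| := abs_sub _ _
      _ ≤ (n : ℝ) * K + (n : ℝ) * K := add_le_add hbar hBdiff
      _ = 2 * ((n : ℝ) * K) := by ring
  have hRHS : (n : ℝ) * (4 * ε * Real.logb 2 (Fintype.card Z) + 4 * H2 ε)
      = 2 * ((n : ℝ) * K) / L := by
    rw [hK, hL, H2, Real.logb, Real.logb, Real.logb]
    simp only [Real.negMulLog]
    field_simp
    ring
  rw [hRHS]
  exact (div_le_div_iff_of_pos_right hLpos).mpr hnum
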